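/- Let x* be a feasible allocation maximizing Π_k v_k(x_k)^{b_k} over all feasible allocations, and for player i let x*_{-i} be a feasible allocation maximizing Π_{k≠i} v_k(x_k)^{b_k}. Assume each v_k is concave, that v_k(x*_k) > 0 for all k and v_k((x*_{-i})_k) > 0 for all k ≠ i, and that v_i(0) = 0. Let B_{-i} = Σ_{k≠i} b_k > 0. Then the Partial Allocation fraction f_i = (Π_{k≠i} v_k(x*_k)^{b_k} / Π_{k≠i} v_k((x*_{-i})_k)^{b_k})^{1/b_i} satisfies f_i ≥ (1 + b_i/B_{-i})^{-B_{-i}/b_i}; hence player i's value f_i·v_i(x*_i) for her Partial Allocation bundle is at least (1 + b_i/B_{-i})^{-B_{-i}/b_i} · v_i(x*_i). -/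

import Mathlib

open Finset

/-- The Partial Allocation fraction of player `i` satisfies
`f_i ≥ (1 + b_i/B_{-i})^{-B_{-i}/b_i}`, and hence her value for her Partial Allocation
bundle is at least that factor times her Proportionally Fair value. -/
theorem stmt_3 {n m : ℕ} (hn : 2 ≤ n) (i : Fin n)
    (v : Fin n → (Fin m → ℝ) → ℝ) (b : Fin n → ℝ)
    (hb : ∀ k, 1 ≤ b k)
    (hv_nonneg : ∀ k (y : Fin m → ℝ), (∀ j, 0 ≤ y j) → 0 ≤ v k y)
    (hv_hom : ∀ k (c : ℝ), 0 ≤ c → ∀ y : Fin m → ℝ, v k (c • y) = c * v k y)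
    (hv_concave : ∀ k, ConcaveOn ℝ Set.univ (v k))
    (hvi_zero : v i 0 = 0)
    (xstar : Fin n → Fin m → ℝ)
    (hxstar_nonneg : ∀ k j, 0 ≤ xstar k j) (hxstar_feas : ∀ j, ∑ k, xstar k j ≤ 1)
    (hxstar_max : ∀ x : Fin n → Fin m → ℝ,
      (∀ k j, 0 ≤ x k j) → (∀ j, ∑ k, x k j ≤ 1) →
      ∏ k, v k (x k) ^ b k ≤ ∏ k, v k (xstar k) ^ b k)
    (xmi : Fin n → Fin m → ℝ)
    (hxmi_nonneg : ∀ k j, 0 ≤ xmi k j) (hxmi_feas : ∀ j, ∑ k, xmi k j ≤ 1)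
    (hxmi_max : ∀ x : Fin n → Fin m → ℝ,
      (∀ k j, 0 ≤ x k j) → (∀ j, ∑ k, x k j ≤ 1) →
      ∏ k ∈ univ.erase i, v k (x k) ^ b k ≤ ∏ k ∈ univ.erase i, v k (xmi k) ^ b k)
    (hpos : ∀ k, 0 < v k (xstar k))
    (hpos' : ∀ k ∈ univ.erase i, 0 < v k (xmi k))
    (hBmi : 0 < ∑ k ∈ univ.erase i, b k) :
    (1 + b i / ∑ k ∈ univ.erase i, b k) ^ (-((∑ k ∈ univ.erase i, b k) / b i))
      ≤ ((∏ k ∈ univ.erase i, v k (xstar k) ^ b k) /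
          (∏ k ∈ univ.erase i, v k (xmi k) ^ b k)) ^ (1 / b i) ∧
    ((1 + b i / ∑ k ∈ univ.erase i, b k) ^ (-((∑ k ∈ univ.erase i, b k) / b i)))
        * v i (xstar i)
      ≤ (((∏ k ∈ univ.erase i, v k (xstar k) ^ b k) /
          (∏ k ∈ univ.erase i, v k (xmi k) ^ b k)) ^ (1 / b i)) * v i (xstar i) := by
  classical
  set B := ∑ k ∈ univ.erase i, b k with hBdef
  have hbi : 0 < b i := lt_of_lt_of_le one_pos (hb i)
  -- the comparison allocation: player i gets nothing, others get their xmi bundle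
  set y : Fin n → Fin m → ℝ := fun k => if k = i then 0 else xmi k with hy
  have hy_nonneg : ∀ k, ∀ j, 0 ≤ y k j := by
    intro k j; by_cases h : k = i <;> simp [hy, h, hxmi_nonneg k j]
  have hy_feas : ∀ j, ∑ k, y k j ≤ 1 := by
    intro j
    calc ∑ k, y k j ≤ ∑ k, xmi k j := by
          refine sum_le_sum fun k _ => ?_
          by_cases h : k = i
          · simp only [hy, h, if_pos rfl, Pi.zero_apply]
            exact hxmi_nonneg i j
          · simp [hy, h]
      _ ≤ 1 := hxmi_feas j
  set ρ : Fin n → ℝ := fun k => v k (y k) / v k (xstar k) with hρ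
  have hρ_nonneg : ∀ k, 0 ≤ ρ k := fun k =>
    div_nonneg (hv_nonneg _ _ (hy_nonneg k)) (hpos k).le
  have hρi : ρ i = 0 := by simp [hρ, hy, hvi_zero]
  -- Claim 1: for 0 < t < 1 we have ∑ b k log(1 + t(ρ k - 1)) ≤ 0
  have hw_pos : ∀ t ∈ Set.Ioo (0:ℝ) 1, ∀ k, 0 < (1-t) * v k (xstar k) + t * v k (y k) := by
    intro t ht k
    obtain ⟨ht1, ht2⟩ := ht
    have h1 := hpos k
    have h2 := hv_nonneg k _ (hy_nonneg k)
    have h3 : 0 < 1 - t := by linarith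
    nlinarith [mul_pos h3 h1, mul_nonneg ht1.le h2]
  have key : ∀ t : ℝ, ∀ k, (1-t) * v k (xstar k) + t * v k (y k)
      = v k (xstar k) * (1 + t * (ρ k - 1)) := by
    intro t k
    have h := (hpos k).ne'
    field_simp [hρ]
    have e : v k (xstar k) * ρ k = v k (y k) := by simp only [hρ]; field_simp
    linear_combination (-t) * e
  have hfac_pos : ∀ t ∈ Set.Ioo (0:ℝ) 1, ∀ k, 0 < 1 + t * (ρ k - 1) := by
    intro t ht k
    have h1 := hw_pos t ht k
    rw [key t k] at h1
    by_contra h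
    push_neg at h
    nlinarith [hpos k]
  have claim1 : ∀ t ∈ Set.Ioo (0:ℝ) 1, ∑ k, b k * Real.log (1 + t * (ρ k - 1)) ≤ 0 := by
    intro t ht
    obtain ⟨ht0, ht1⟩ := ht
    set z : Fin n → Fin m → ℝ := fun k => (1 - t) • xstar k + t • y k with hz
    have hz_nonneg : ∀ k j, 0 ≤ z k j := by
      intro k j
      have h1 := hxstar_nonneg k j
      have h2 := hy_nonneg k j
      simp only [hz, Pi.add_apply, Pi.smul_apply, smul_eq_mul]
      nlinarith
    have hz_feas : ∀ j, ∑ k, z k j ≤ 1 := by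
      intro j
      have hsum : ∑ k, z k j = (1-t) * ∑ k, xstar k j + t * ∑ k, y k j := by
        simp only [hz, Pi.add_apply, Pi.smul_apply, smul_eq_mul]
        rw [Finset.sum_add_distrib, Finset.mul_sum, Finset.mul_sum]
      rw [hsum]
      nlinarith [hxstar_feas j, hy_feas j]
    have hmax := hxstar_max z hz_nonneg hz_feas
    have hconc : ∀ k, (1-t) * v k (xstar k) + t * v k (y k) ≤ v k (z k) := by
      intro k
      have := (hv_concave k).2 (Set.mem_univ (xstar k)) (Set.mem_univ (y k))
        (by linarith : (0:ℝ) ≤ 1 - t) ht0.le (by ring)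
      simpa [smul_eq_mul] using this
    have hwp : ∀ k, 0 < (1-t) * v k (xstar k) + t * v k (y k) := hw_pos t ⟨ht0, ht1⟩
    have hprod : ∏ k, ((1-t) * v k (xstar k) + t * v k (y k)) ^ b k
        ≤ ∏ k, v k (xstar k) ^ b k := by
      refine le_trans (Finset.prod_le_prod (fun k _ => Real.rpow_nonneg (hwp k).le _)
        (fun k _ => Real.rpow_le_rpow (hwp k).le (hconc k)
          (le_trans zero_le_one (hb k)))) hmax
    have hsum : ∑ k, b k * Real.log (v k (xstar k) * (1 + t * (ρ k - 1)))
        ≤ ∑ k, b k * Real.log (v k (xstar k)) := by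
      calc ∑ k, b k * Real.log (v k (xstar k) * (1 + t * (ρ k - 1)))
          = ∑ k, Real.log (((1-t) * v k (xstar k) + t * v k (y k)) ^ b k) := by
            refine Finset.sum_congr rfl fun k _ => ?_
            rw [Real.log_rpow (hwp k), key t k]
        _ = Real.log (∏ k, ((1-t) * v k (xstar k) + t * v k (y k)) ^ b k) :=
            (Real.log_prod (fun k _ => (Real.rpow_pos_of_pos (hwp k) _).ne')).symm
        _ ≤ Real.log (∏ k, v k (xstar k) ^ b k) :=
            Real.log_le_log (Finset.prod_pos fun k _ => Real.rpow_pos_of_pos (hwp k) _) hprod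
        _ = ∑ k, Real.log (v k (xstar k) ^ b k) :=
            Real.log_prod (fun k _ => (Real.rpow_pos_of_pos (hpos k) _).ne')
        _ = ∑ k, b k * Real.log (v k (xstar k)) :=
            Finset.sum_congr rfl fun k _ => Real.log_rpow (hpos k) _
    have hsum2 : ∑ k, (b k * Real.log (v k (xstar k)) + b k * Real.log (1 + t * (ρ k - 1)))
        ≤ ∑ k, b k * Real.log (v k (xstar k)) := by
      refine le_trans (le_of_eq (Finset.sum_congr rfl fun k _ => ?_)) hsum
      rw [Real.log_mul (hpos k).ne' (hfac_pos t ⟨ht0, ht1⟩ k).ne', mul_add]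
    rw [Finset.sum_add_distrib] at hsum2
    linarith
  -- Claim 2: linearized optimality via derivative at 0
  have claim2 : ∑ k, b k * (ρ k - 1) ≤ 0 := by
    set g : ℝ → ℝ := fun t => ∑ k, b k * Real.log (1 + t * (ρ k - 1)) with hg
    have hder : HasDerivAt g (∑ k, b k * (ρ k - 1)) 0 := by
      apply HasDerivAt.fun_sum
      intro k _
      have h1 : HasDerivAt (fun t : ℝ => 1 + t * (ρ k - 1)) (ρ k - 1) 0 := by
        simpa using ((hasDerivAt_id (0:ℝ)).mul_const (ρ k - 1)).const_add 1
      have h2 : HasDerivAt (fun t : ℝ => Real.log (1 + t * (ρ k - 1))) (ρ k - 1) 0 := by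
        have h3 := (Real.hasDerivAt_log (by norm_num : (1:ℝ) + 0 * (ρ k - 1) ≠ 0)).comp 0 h1
        simpa [Function.comp_def] using h3
      simpa using h2.const_mul (b k)
    have hslope := hasDerivAt_iff_tendsto_slope.mp hder
    have hmono : nhdsWithin (0:ℝ) (Set.Ioi 0) ≤ nhdsWithin 0 {(0:ℝ)}ᶜ :=
      nhdsWithin_mono _ (fun t ht => ne_of_gt ht)
    refine le_of_tendsto (hslope.mono_left hmono) ?_
    filter_upwards [Ioo_mem_nhdsGT_of_mem (Set.left_mem_Ico.mpr one_pos)] with t ht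
    have hg0 : g 0 = 0 := by simp [hg]
    have hgt : g t ≤ 0 := claim1 t ht
    show slope g 0 t ≤ 0
    rw [slope_def_field, hg0, sub_zero, sub_zero]
    exact div_nonpos_iff.mpr (Or.inr ⟨hgt, ht.1.le⟩)
  -- hence ∑_{k≠i} b k ρ k ≤ b i + B
  have hsum_rho : ∑ k ∈ univ.erase i, b k * ρ k ≤ b i + B := by
    have h1 : ∑ k, b k * ρ k ≤ ∑ k, b k := by
      have h := claim2
      simp only [mul_sub, mul_one] at h
      rw [Finset.sum_sub_distrib] at h
      linarith
    have h2 : ∑ k ∈ univ.erase i, b k * ρ k + b i * ρ i = ∑ k, b k * ρ k :=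
      Finset.sum_erase_add _ _ (mem_univ i)
    have h3 : ∑ k ∈ univ.erase i, b k + b i = ∑ k, b k :=
      Finset.sum_erase_add _ _ (mem_univ i)
    rw [hρi, mul_zero, add_zero] at h2
    rw [hBdef] at *
    linarith
  -- AM-GM
  have hamgm : ∏ k ∈ univ.erase i, ρ k ^ (b k / B) ≤ 1 + b i / B := by
    have h := Real.geom_mean_le_arith_mean_weighted (univ.erase i) (fun k => b k / B) ρ
      (fun k _ => div_nonneg (le_trans zero_le_one (hb k)) hBmi.le)
      (by rw [← Finset.sum_div]; exact div_self hBmi.ne')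
      (fun k _ => hρ_nonneg k)
    refine h.trans ?_
    have heq : ∑ k ∈ univ.erase i, b k / B * ρ k = (∑ k ∈ univ.erase i, b k * ρ k) / B := by
      rw [Finset.sum_div]; exact Finset.sum_congr rfl fun k _ => by ring
    rw [heq, div_le_iff₀ hBmi]
    have : (1 + b i / B) * B = B + b i := by field_simp
    rw [this]
    linarith
  set C := 1 + b i / B with hC
  have hC_pos : 0 < C := by
    have : 0 ≤ b i / B := div_nonneg hbi.le hBmi.le
    rw [hC]; linarith
  have hR : ∏ k ∈ univ.erase i, ρ k ^ b k ≤ C ^ B := by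
    have h1 : ∏ k ∈ univ.erase i, ρ k ^ b k
        = (∏ k ∈ univ.erase i, ρ k ^ (b k / B)) ^ B := by
      rw [← Real.finset_prod_rpow _ _ (fun k _ => Real.rpow_nonneg (hρ_nonneg k) _) B]
      refine Finset.prod_congr rfl fun k _ => ?_
      rw [← Real.rpow_mul (hρ_nonneg k), div_mul_cancel₀ _ hBmi.ne']
    rw [h1]
    exact Real.rpow_le_rpow (Finset.prod_nonneg fun k _ => Real.rpow_nonneg (hρ_nonneg k) _)
      hamgm hBmi.le
  have hP_pos : 0 < ∏ k ∈ univ.erase i, v k (xstar k) ^ b k :=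
    Finset.prod_pos fun k _ => Real.rpow_pos_of_pos (hpos k) _
  have hQ_pos : 0 < ∏ k ∈ univ.erase i, v k (xmi k) ^ b k :=
    Finset.prod_pos fun k hk => Real.rpow_pos_of_pos (hpos' k hk) _
  have hQP : (∏ k ∈ univ.erase i, v k (xmi k) ^ b k)
      / (∏ k ∈ univ.erase i, v k (xstar k) ^ b k) ≤ C ^ B := by
    refine le_trans (le_of_eq ?_) hR
    rw [← Finset.prod_div_distrib]
    refine Finset.prod_congr rfl fun k hk => ?_
    have hki : k ≠ i := Finset.ne_of_mem_erase hk
    rw [← Real.div_rpow (hv_nonneg k _ (hxmi_nonneg k)) (hpos k).le]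
    congr 1
    simp [hρ, hy, hki]
  have main : C ^ (-(B / b i))
      ≤ ((∏ k ∈ univ.erase i, v k (xstar k) ^ b k) /
          (∏ k ∈ univ.erase i, v k (xmi k) ^ b k)) ^ (1 / b i) := by
    have hPQ : C ^ (-B) ≤ (∏ k ∈ univ.erase i, v k (xstar k) ^ b k) /
        (∏ k ∈ univ.erase i, v k (xmi k) ^ b k) := by
      rw [Real.rpow_neg hC_pos.le]
      have h4 : (∏ k ∈ univ.erase i, v k (xstar k) ^ b k) /
          (∏ k ∈ univ.erase i, v k (xmi k) ^ b k)
          = ((∏ k ∈ univ.erase i, v k (xmi k) ^ b k) /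
            (∏ k ∈ univ.erase i, v k (xstar k) ^ b k))⁻¹ := by
        rw [inv_div]
      rw [h4]
      exact inv_anti₀ (div_pos hQ_pos hP_pos) hQP
    have h5 := Real.rpow_le_rpow (Real.rpow_nonneg hC_pos.le _) hPQ
      (by positivity : (0:ℝ) ≤ 1 / b i)
    rw [← Real.rpow_mul hC_pos.le] at h5
    rw [show -B * (1 / b i) = -(B / b i) by ring] at h5
    exact h5
  exact ⟨main, mul_le_mul_of_nonneg_right main (hv_nonneg i _ (hxstar_nonneg i))⟩
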